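/- Under the same hypotheses, for each fixed s ∈ [a+1, b] the function t ↦ v(t,s) = u(t,s) - H_{ν-1}(t,s-1) is nonincreasing in t on [s, b], i.e., v(t,s) - v(t-1,s) ≤ 0 for s+1 ≤ t ≤ b. -/

import Mathlib

noncomputable def H (μ : ℝ) (t a : ℤ) : ℝ :=
  Real.Gamma ((t : ℝ) - a + μ) / (Real.Gamma ((t : ℝ) - a) * Real.Gamma (μ + 1))

noncomputable def xiBVP (ν : ℝ) (a b : ℤ) (α β γ δ : ℝ) : ℝ :=
  (β - α) * γ + α * γ * H (ν - 1) b a + α * δ * H (ν - 2) b a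

noncomputable def uG (ν : ℝ) (a b : ℤ) (α β γ δ : ℝ) (t s : ℤ) : ℝ :=
  (1 / xiBVP ν a b α β γ δ) *
    (α * γ * H (ν - 1) t a * H (ν - 1) b (s - 1)
      + α * δ * H (ν - 1) t a * H (ν - 2) b (s - 1)
      + (β - α) * γ * H (ν - 1) b (s - 1)
      + (β - α) * δ * H (ν - 2) b (s - 1))

noncomputable def vG (ν : ℝ) (a b : ℤ) (α β γ δ : ℝ) (t s : ℤ) : ℝ :=
  uG ν a b α β γ δ t s - H (ν - 1) t (s - 1)

noncomputable def GG (ν : ℝ) (a b : ℤ) (α β γ δ : ℝ) (t s : ℤ) : ℝ :=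
  if t ≤ s - 1 then uG ν a b α β γ δ t s else vG ν a b α β γ δ t s

/-- Product representation of the discrete monomial. -/
noncomputable def Qp (μ : ℝ) (n : ℕ) : ℝ :=
  ∏ k ∈ Finset.range n, (((k : ℝ) + 1 + μ) / ((k : ℝ) + 1))

lemma Qp_zero (μ : ℝ) : Qp μ 0 = 1 := by simp [Qp]

lemma Qp_succ (μ : ℝ) (n : ℕ) :
    Qp μ (n + 1) = Qp μ n * (((n : ℝ) + 1 + μ) / ((n : ℝ) + 1)) := by
  simp [Qp, Finset.prod_range_succ, div_mul_div_comm]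

lemma Qp_pos (μ : ℝ) (hμ : -1 < μ) (n : ℕ) : 0 < Qp μ n := by
  induction n with
  | zero => simp [Qp_zero]
  | succ n ih =>
    rw [Qp_succ]
    have h0 : (0 : ℝ) ≤ n := Nat.cast_nonneg n
    have h1 : (0 : ℝ) < (n : ℝ) + 1 + μ := by linarith
    have h2 : (0 : ℝ) < (n : ℝ) + 1 := by linarith
    exact mul_pos ih (div_pos h1 h2)

lemma H_eq_Qp (μ : ℝ) (hμ : -1 < μ) (a : ℤ) (n : ℕ) :
    H μ (a + 1 + n) a = Qp μ n := by
  have hΓμ : Real.Gamma (μ + 1) ≠ 0 := (Real.Gamma_pos_of_pos (by linarith)).ne'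
  induction n with
  | zero =>
    have h1 : ((a + 1 + ((0 : ℕ) : ℤ) : ℤ) : ℝ) - (a : ℝ) = 1 := by push_cast; ring
    simp only [H, h1, Qp_zero, Real.Gamma_one, one_mul, add_comm (1 : ℝ) μ]
    exact div_self hΓμ
  | succ n ih =>
    have h0 : ((a + 1 + ((n : ℕ) : ℤ) : ℤ) : ℝ) - (a : ℝ) = (n : ℝ) + 1 := by
      push_cast; ring
    have h1 : ((a + 1 + ((n + 1 : ℕ) : ℤ) : ℤ) : ℝ) - (a : ℝ) = (n : ℝ) + 2 := by
      push_cast; ring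
    have hn1 : (0 : ℝ) < (n : ℝ) + 1 := by positivity
    have hnμ : ((n : ℝ) + 1 + μ) ≠ 0 := by
      have h0' : (0 : ℝ) ≤ n := Nat.cast_nonneg n
      have : (0 : ℝ) < (n : ℝ) + 1 + μ := by linarith
      exact this.ne'
    simp only [H, h0] at ih
    simp only [H, h1]
    rw [Qp_succ, ← ih]
    have e1 : (n : ℝ) + 2 + μ = ((n : ℝ) + 1 + μ) + 1 := by ring
    have e2 : (n : ℝ) + 2 = ((n : ℝ) + 1) + 1 := by ring
    rw [e1, e2, Real.Gamma_add_one hnμ, Real.Gamma_add_one hn1.ne']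
    have hΓ1 : Real.Gamma ((n : ℝ) + 1) ≠ 0 := (Real.Gamma_pos_of_pos hn1).ne'
    field_simp

lemma H_eq_Qp' (μ : ℝ) (hμ : -1 < μ) (t a : ℤ) (n : ℕ) (h : t = a + 1 + n) :
    H μ t a = Qp μ n := by
  rw [h]; exact H_eq_Qp μ hμ a n

lemma Qp_shift (μ : ℝ) (n : ℕ) :
    Qp (μ - 1) (n + 1) = Qp μ n * (μ / ((n : ℝ) + 1)) := by
  induction n with
  | zero => simp [Qp_succ, Qp_zero]
  | succ n ih =>
    rw [Qp_succ (μ - 1) (n + 1), ih, Qp_succ μ n]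
    have h1 : ((n : ℝ) + 1) ≠ 0 := by positivity
    have h2 : ((n : ℝ) + 1 + 1) ≠ 0 := by positivity
    push_cast
    field_simp
    ring

lemma Qp_diff (μ : ℝ) (n : ℕ) :
    Qp μ (n + 1) - Qp μ n = Qp (μ - 1) (n + 1) := by
  rw [Qp_shift, Qp_succ]
  have h1 : ((n : ℝ) + 1) ≠ 0 := by positivity
  field_simp
  ring

lemma Qp_mono (μ : ℝ) (hμ : 0 ≤ μ) {m n : ℕ} (h : m ≤ n) : Qp μ m ≤ Qp μ n := by
  induction n, h using Nat.le_induction with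
  | base => exact le_refl _
  | succ n hn ih =>
    rw [Qp_succ]
    have h0 : (0 : ℝ) < (n : ℝ) + 1 := by positivity
    have hc : (1 : ℝ) ≤ ((n : ℝ) + 1 + μ) / ((n : ℝ) + 1) := by
      rw [le_div_iff₀ h0]; linarith
    have hp : 0 < Qp μ n := Qp_pos μ (by linarith) n
    calc Qp μ m ≤ Qp μ n := ih
      _ = Qp μ n * 1 := by ring
      _ ≤ Qp μ n * (((n : ℝ) + 1 + μ) / ((n : ℝ) + 1)) := by
          exact mul_le_mul_of_nonneg_left hc hp.le

lemma Qp_anti (μ : ℝ) (hμ1 : -1 < μ) (hμ2 : μ ≤ 0) {m n : ℕ} (h : m ≤ n) :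
    Qp μ n ≤ Qp μ m := by
  induction n, h using Nat.le_induction with
  | base => exact le_refl _
  | succ n hn ih =>
    rw [Qp_succ]
    have h0 : (0 : ℝ) < (n : ℝ) + 1 := by positivity
    have hc : ((n : ℝ) + 1 + μ) / ((n : ℝ) + 1) ≤ 1 := by
      rw [div_le_one h0]; linarith
    have hc0 : 0 ≤ ((n : ℝ) + 1 + μ) / ((n : ℝ) + 1) := by
      apply div_nonneg _ h0.le
      have h0' : (0 : ℝ) ≤ n := Nat.cast_nonneg n
      linarith
    have hp : 0 < Qp μ n := Qp_pos μ hμ1 n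
    calc Qp μ n * (((n : ℝ) + 1 + μ) / ((n : ℝ) + 1)) ≤ Qp μ n * 1 := by
          exact mul_le_mul_of_nonneg_left hc hp.le
      _ = Qp μ n := by ring
      _ ≤ Qp μ m := ih

lemma Qp_factor_mono (μ : ℝ) (hμ2 : μ ≤ 0) {m n : ℕ} (h : m ≤ n) :
    ((m : ℝ) + 1 + μ) / ((m : ℝ) + 1) ≤ ((n : ℝ) + 1 + μ) / ((n : ℝ) + 1) := by
  have hm : (0 : ℝ) < (m : ℝ) + 1 := by positivity
  have hn : (0 : ℝ) < (n : ℝ) + 1 := by positivity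
  rw [div_le_div_iff₀ hm hn]
  have hmn : (m : ℝ) ≤ (n : ℝ) := Nat.cast_le.mpr h
  nlinarith

lemma Qp_four (μ : ℝ) (hμ1 : -1 < μ) (hμ2 : μ ≤ 0) (m n : ℕ) (h : m ≤ n) (d : ℕ) :
    Qp μ n * Qp μ (m + d) ≤ Qp μ (n + d) * Qp μ m := by
  induction d with
  | zero => simp [mul_comm]
  | succ d ih =>
    have e1 : n + (d + 1) = (n + d) + 1 := by ring
    have e2 : m + (d + 1) = (m + d) + 1 := by ring
    rw [e1, e2, Qp_succ, Qp_succ]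
    have hcm : (0 : ℝ) ≤ ((↑(m + d) : ℝ) + 1 + μ) / ((↑(m + d) : ℝ) + 1) := by
      apply div_nonneg _ (by positivity)
      have : (0 : ℝ) ≤ (↑(m + d) : ℝ) := Nat.cast_nonneg _
      linarith
    have hfac := Qp_factor_mono μ hμ2 (Nat.add_le_add_right h d)
    have hpos : 0 < Qp μ (n + d) * Qp μ m :=
      mul_pos (Qp_pos μ hμ1 _) (Qp_pos μ hμ1 _)
    calc Qp μ n * (Qp μ (m + d) * (((↑(m + d) : ℝ) + 1 + μ) / ((↑(m + d) : ℝ) + 1)))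
        = (Qp μ n * Qp μ (m + d)) * (((↑(m + d) : ℝ) + 1 + μ) / ((↑(m + d) : ℝ) + 1)) := by
          ring
      _ ≤ (Qp μ (n + d) * Qp μ m) * (((↑(m + d) : ℝ) + 1 + μ) / ((↑(m + d) : ℝ) + 1)) :=
          mul_le_mul_of_nonneg_right ih hcm
      _ ≤ (Qp μ (n + d) * Qp μ m) * (((↑(n + d) : ℝ) + 1 + μ) / ((↑(n + d) : ℝ) + 1)) :=
          mul_le_mul_of_nonneg_left hfac hpos.le
      _ = Qp μ (n + d) * (((↑(n + d) : ℝ) + 1 + μ) / ((↑(n + d) : ℝ) + 1)) * Qp μ m := by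
          ring

theorem v_antitone (ν : ℝ) (hν1 : 1 < ν) (hν2 : ν < 2) (a b : ℤ) (hab : a + 1 ≤ b)
    (α β γ δ : ℝ) (hα : 0 ≤ α) (hβ : 0 ≤ β) (hγ : 0 ≤ γ) (hδ : 0 ≤ δ)
    (hba : α ≤ β) (hξ : 0 < xiBVP ν a b α β γ δ)
    (s : ℤ) (hsa : a + 1 ≤ s) (hsb : s ≤ b)
    (t : ℤ) (hts : s + 1 ≤ t) (htb : t ≤ b) :
    vG ν a b α β γ δ t s - vG ν a b α β γ δ (t - 1) s ≤ 0 := by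
  obtain ⟨j, hj⟩ : ∃ j : ℕ, t = s + 1 + j := ⟨(t - s - 1).toNat, by omega⟩
  obtain ⟨d, hd⟩ : ∃ d : ℕ, s = a + 1 + d := ⟨(s - a - 1).toNat, by omega⟩
  obtain ⟨e, he⟩ : ∃ e : ℕ, b = t + e := ⟨(b - t).toNat, by omega⟩
  have hm1 : (-1 : ℝ) < ν - 1 := by linarith
  have hm2 : (-1 : ℝ) < ν - 2 := by linarith
  have hm2' : ν - 2 ≤ 0 := by linarith
  have hm1' : (0 : ℝ) ≤ ν - 1 := by linarith
  have r1 : H (ν - 1) t a = Qp (ν - 1) (d + j + 1) :=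
    H_eq_Qp' _ hm1 _ _ _ (by omega)
  have r2 : H (ν - 1) (t - 1) a = Qp (ν - 1) (d + j) :=
    H_eq_Qp' _ hm1 _ _ _ (by omega)
  have r3 : H (ν - 1) b a = Qp (ν - 1) (d + j + 1 + e) :=
    H_eq_Qp' _ hm1 _ _ _ (by omega)
  have r4 : H (ν - 2) b a = Qp (ν - 2) (d + j + 1 + e) :=
    H_eq_Qp' _ hm2 _ _ _ (by omega)
  have r5 : H (ν - 1) b (s - 1) = Qp (ν - 1) (j + 1 + e) :=
    H_eq_Qp' _ hm1 _ _ _ (by omega)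
  have r6 : H (ν - 2) b (s - 1) = Qp (ν - 2) (j + 1 + e) :=
    H_eq_Qp' _ hm2 _ _ _ (by omega)
  have r7 : H (ν - 1) t (s - 1) = Qp (ν - 1) (j + 1) :=
    H_eq_Qp' _ hm1 _ _ _ (by omega)
  have r8 : H (ν - 1) (t - 1) (s - 1) = Qp (ν - 1) j :=
    H_eq_Qp' _ hm1 _ _ _ (by omega)
  simp only [xiBVP, r3, r4] at hξ
  -- positivity facts
  have pQdj1 := Qp_pos (ν - 2) hm2 (d + j + 1)
  have pQj1 := Qp_pos (ν - 2) hm2 (j + 1)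
  have pB1 := Qp_pos (ν - 1) hm1 (j + 1 + e)
  have pB2 := Qp_pos (ν - 2) hm2 (j + 1 + e)
  -- the two key monotonicity facts
  have t2 : Qp (ν - 1) (j + 1 + e) * Qp (ν - 2) (d + j + 1)
      ≤ Qp (ν - 1) (d + j + 1 + e) * Qp (ν - 2) (j + 1) :=
    mul_le_mul (Qp_mono (ν - 1) hm1' (by omega))
      (Qp_anti (ν - 2) hm2 hm2' (by omega)) pQdj1.le
      (Qp_pos (ν - 1) hm1 _).le
  have t3 : Qp (ν - 2) (d + j + 1) * Qp (ν - 2) (j + 1 + e)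
      ≤ Qp (ν - 2) (d + j + 1 + e) * Qp (ν - 2) (j + 1) :=
    Qp_four (ν - 2) hm2 hm2' (j + 1) (d + j + 1) (by omega) e
  have h2 := mul_le_mul_of_nonneg_left t2 (mul_nonneg hα hγ)
  have h3 := mul_le_mul_of_nonneg_left t3 (mul_nonneg hα hδ)
  have h4 : 0 ≤ (β - α) * γ * Qp (ν - 2) (j + 1) :=
    mul_nonneg (mul_nonneg (by linarith) hγ) pQj1.le
  have h1 : (α * γ * Qp (ν - 1) (j + 1 + e) + α * δ * Qp (ν - 2) (j + 1 + e))
        * Qp (ν - 2) (d + j + 1)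
      ≤ ((β - α) * γ + α * γ * Qp (ν - 1) (d + j + 1 + e)
          + α * δ * Qp (ν - 2) (d + j + 1 + e)) * Qp (ν - 2) (j + 1) := by
    nlinarith [h2, h3, h4]
  have main : 1 / ((β - α) * γ + α * γ * Qp (ν - 1) (d + j + 1 + e)
          + α * δ * Qp (ν - 2) (d + j + 1 + e))
        * ((α * γ * Qp (ν - 1) (j + 1 + e) + α * δ * Qp (ν - 2) (j + 1 + e))
          * Qp (ν - 2) (d + j + 1))
      ≤ Qp (ν - 2) (j + 1) := by
    set X := (β - α) * γ + α * γ * Qp (ν - 1) (d + j + 1 + e)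
        + α * δ * Qp (ν - 2) (d + j + 1 + e) with hX
    calc 1 / X * ((α * γ * Qp (ν - 1) (j + 1 + e) + α * δ * Qp (ν - 2) (j + 1 + e))
            * Qp (ν - 2) (d + j + 1))
        ≤ 1 / X * (X * Qp (ν - 2) (j + 1)) := by
          exact mul_le_mul_of_nonneg_left h1 (by positivity)
      _ = Qp (ν - 2) (j + 1) := by field_simp
  -- rewrite the goal in terms of Qp
  have hx : Qp (ν - 1) (d + j + 1) = Qp (ν - 1) (d + j) + Qp (ν - 2) (d + j + 1) := by
    have := Qp_diff (ν - 1) (d + j)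
    rw [show ν - 1 - 1 = ν - 2 by ring] at this
    linarith
  have hy : Qp (ν - 1) (j + 1) = Qp (ν - 1) j + Qp (ν - 2) (j + 1) := by
    have := Qp_diff (ν - 1) j
    rw [show ν - 1 - 1 = ν - 2 by ring] at this
    linarith
  simp only [vG, uG, xiBVP, r1, r2, r3, r4, r5, r6, r7, r8, hx, hy]
  linarith [main]
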